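/- Fixed-metabolite optimality theorem: Fix x̄ and set κ = κ(x̄,p), τ = σ(κ). Consider minimizing Σ_{r∈supp(κ)} w_r f_r/κ_r over flux modes f ∈ C with σ(f) ≤ τ and f_{r*} = 1. If this problem is feasible, then its minimum is attained at some f that is an elementary flux mode (with f_{r*} = 1), and the minimum value equals min over EFMs e conforming to τ with e_{r*} = 1 of g_e = Σ_{r∈supp(κ)} w_r e_r/κ_r. -/

import Mathlib

def fluxCone {S R : Type*} [Fintype R] (N : Matrix S R ℝ) (Rirr : Set R) :
    Set (R → ℝ) :=
  {f | N.mulVec f = 0 ∧ ∀ r ∈ Rirr, 0 ≤ f r}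

def IsEFM {S R : Type*} [Fintype R] (N : Matrix S R ℝ) (Rirr : Set R)
    (e : R → ℝ) : Prop :=
  e ∈ fluxCone N Rirr ∧ e ≠ 0 ∧
    ∀ g ∈ fluxCone N Rirr, g ≠ 0 →
      Function.support g ⊆ Function.support e →
      Function.support g = Function.support e

def Conforms {R : Type*} (x y : R → ℝ) : Prop :=
  ∀ r, x r = 0 ∨ (0 < x r ∧ 0 < y r) ∨ (x r < 0 ∧ y r < 0)

open Classical

set_option linter.unusedSectionVars false

section FMO

variable {S R : Type*} [Fintype S] [Fintype R]

noncomputable def suppF (f : R → ℝ) : Finset R :=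
  Finset.univ.filter (fun r => f r ≠ 0)

lemma mem_suppF {f : R → ℝ} {r : R} : r ∈ suppF f ↔ f r ≠ 0 := by
  simp [suppF]

noncomputable def cost (κ w : R → ℝ) (f : R → ℝ) : ℝ := ∑ r, w r * f r / κ r

def Feas (N : Matrix S R ℝ) (Rirr : Set R) (κ : R → ℝ) (rstar : R)
    (f : R → ℝ) : Prop :=
  f ∈ fluxCone N Rirr ∧ Conforms f κ ∧ f rstar = 1

lemma conforms_smul {κ f : R → ℝ} (c : ℝ) (hc : 0 < c) (h : Conforms f κ) :
    Conforms (c • f) κ := by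
  intro r
  rcases h r with h0 | ⟨h1, h2⟩ | ⟨h1, h2⟩
  · left; simp [h0]
  · exact Or.inr (Or.inl ⟨by simpa [smul_eq_mul] using mul_pos hc h1, h2⟩)
  · exact Or.inr (Or.inr ⟨by simpa [smul_eq_mul] using mul_neg_of_pos_of_neg hc h1, h2⟩)

lemma cone_smul {N : Matrix S R ℝ} {Rirr : Set R} {f : R → ℝ} (c : ℝ)
    (hc : 0 ≤ c) (hf : f ∈ fluxCone N Rirr) : c • f ∈ fluxCone N Rirr := by
  refine ⟨?_, fun r hr => ?_⟩
  · rw [Matrix.mulVec_smul, hf.1]; simp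
  · simpa [smul_eq_mul] using mul_nonneg hc (hf.2 r hr)

lemma term_nonneg {κ w f : R → ℝ} (hw : ∀ r, 0 < w r) (h : Conforms f κ)
    (r : R) : 0 ≤ w r * f r / κ r := by
  rcases h r with h0 | ⟨h1, h2⟩ | ⟨h1, h2⟩
  · simp [h0]
  · exact div_nonneg (mul_nonneg (hw r).le h1.le) h2.le
  · exact div_nonneg_of_nonpos (by nlinarith [hw r]) h2.le

lemma cost_nonneg {κ w f : R → ℝ} (hw : ∀ r, 0 < w r) (h : Conforms f κ) :
    0 ≤ cost κ w f :=
  Finset.sum_nonneg fun r _ => term_nonneg hw h r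

lemma eq_zero_of_cost_nonpos {κ w f : R → ℝ} (hw : ∀ r, 0 < w r)
    (h : Conforms f κ) (h0 : cost κ w f ≤ 0) : f = 0 := by
  have hc0 : cost κ w f = 0 := le_antisymm h0 (cost_nonneg hw h)
  have hz : ∀ r ∈ Finset.univ, w r * f r / κ r = 0 :=
    (Finset.sum_eq_zero_iff_of_nonneg (fun r _ => term_nonneg hw h r)).mp hc0
  funext r
  rcases h r with hr | ⟨h1, h2⟩ | ⟨h1, h2⟩
  · exact hr
  · exfalso
    have : 0 < w r * f r / κ r := div_pos (mul_pos (hw r) h1) h2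
    have := hz r (Finset.mem_univ r)
    linarith
  · exfalso
    have : 0 < w r * f r / κ r :=
      div_pos_of_neg_of_neg (by nlinarith [hw r]) h2
    have := hz r (Finset.mem_univ r)
    linarith

lemma cost_add_smul (κ w : R → ℝ) (f g : R → ℝ) (t : ℝ) :
    cost κ w (f + t • g) = cost κ w f + t * cost κ w g := by
  unfold cost
  rw [Finset.mul_sum, ← Finset.sum_add_distrib]
  refine Finset.sum_congr rfl fun r _ => ?_
  simp only [Pi.add_apply, Pi.smul_apply, smul_eq_mul]
  ring

lemma cost_smul (κ w : R → ℝ) (f : R → ℝ) (c : ℝ) :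
    cost κ w (c • f) = c * cost κ w f := by
  unfold cost
  rw [Finset.mul_sum]
  refine Finset.sum_congr rfl fun r _ => ?_
  simp only [Pi.smul_apply, smul_eq_mul]
  ring

lemma cost_neg (κ w : R → ℝ) (f : R → ℝ) : cost κ w (-f) = -(cost κ w f) := by
  have := cost_smul κ w f (-1)
  simpa [neg_one_smul] using this

lemma suppF_smul {f : R → ℝ} {c : ℝ} (hc : c ≠ 0) : suppF (c • f) = suppF f := by
  ext r
  simp [mem_suppF, smul_eq_mul, mul_eq_zero, hc]

lemma conforms_of_dom {κ f : R → ℝ} (hf : Conforms f κ) (h : R → ℝ)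
    (h1 : ∀ r, 0 ≤ h r * f r) (h2 : ∀ r, f r = 0 → h r = 0) :
    Conforms h κ := by
  intro r
  rcases hf r with h0 | ⟨ha, hb⟩ | ⟨ha, hb⟩
  · left; exact h2 r h0
  · have hnn : 0 ≤ h r := by nlinarith [h1 r]
    rcases hnn.eq_or_lt with heq | hlt
    · left; exact heq.symm
    · exact Or.inr (Or.inl ⟨hlt, hb⟩)
  · have hnp : h r ≤ 0 := by nlinarith [h1 r]
    rcases hnp.eq_or_lt with heq | hlt
    · left; exact heq
    · exact Or.inr (Or.inr ⟨hlt, hb⟩)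

lemma shrink_core (N : Matrix S R ℝ) (Rirr : Set R) (κ w : R → ℝ)
    (hw : ∀ r, 0 < w r) (rstar : R) (f g : R → ℝ)
    (hf : Feas N Rirr κ rstar f)
    (hg0 : N.mulVec g = 0) (hgne : g ≠ 0)
    (hsub : Function.support g ⊆ Function.support f)
    (hne : Function.support g ≠ Function.support f)
    (hd : cost κ w g ≤ cost κ w f * g rstar) :
    ∃ f', Feas N Rirr κ rstar f' ∧ cost κ w f' ≤ cost κ w f ∧
      (suppF f').card < (suppF f).card := by
  obtain ⟨⟨hfN, hfirr⟩, hfc, hfr⟩ := hf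
  have hzero : ∀ r, f r = 0 → g r = 0 := by
    intro r hr
    by_contra hgr
    exact (hsub (Function.mem_support.mpr hgr)) hr
  by_cases hex : ∃ r, g r * f r < 0
  · -- Case A: finite endpoint in the + direction
    obtain ⟨r₀, hr₀⟩ := hex
    set T : Finset R := Finset.univ.filter (fun r => g r * f r < 0) with hT
    have hTne : T.Nonempty := ⟨r₀, by simp [hT, hr₀]⟩
    have hTfacts : ∀ r ∈ T, g r ≠ 0 ∧ f r ≠ 0 ∧ 0 < -(f r / g r) := by
      intro r hr
      have hprod : g r * f r < 0 := by simpa [hT] using hr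
      have hgne' : g r ≠ 0 := fun h => by simp [h] at hprod
      have hfne' : f r ≠ 0 := fun h => by simp [h] at hprod
      refine ⟨hgne', hfne', ?_⟩
      rcases mul_neg_iff.mp hprod with ⟨hg1, hf1⟩ | ⟨hg1, hf1⟩
      · have : f r / g r < 0 := div_neg_of_neg_of_pos hf1 hg1
        linarith
      · have : f r / g r < 0 := div_neg_of_pos_of_neg hf1 hg1
        linarith
    obtain ⟨rh, hrhT, hrh⟩ := T.exists_mem_eq_inf' hTne (fun r => -(f r / g r))
    set t : ℝ := T.inf' hTne (fun r => -(f r / g r)) with ht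
    have htpos : 0 < t := by
      rw [hrh]
      exact (hTfacts rh hrhT).2.2
    set h : R → ℝ := f + t • g with hhdef
    have happ : ∀ r, h r = f r + t * g r := fun r => by
      simp [hhdef, smul_eq_mul]
    have hz2 : ∀ r, f r = 0 → h r = 0 := by
      intro r hr
      rw [happ, hr, hzero r hr]; ring
    have key : ∀ r, 0 ≤ h r * f r := by
      intro r
      by_cases hfr0 : f r = 0
      · simp [hz2 r hfr0, hfr0]
      rcases le_or_gt 0 (g r * f r) with hp | hp
      · rw [happ]
        nlinarith [mul_self_nonneg (f r)]
      · have hrT : r ∈ T := by simp [hT, hp]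
        have h1 : t ≤ -(f r / g r) := Finset.inf'_le _ hrT
        have hg' := (hTfacts r hrT).1
        have h2 : t * (-(g r * f r)) ≤ (-(f r / g r)) * (-(g r * f r)) :=
          mul_le_mul_of_nonneg_right h1 (by linarith)
        have h3 : (-(f r / g r)) * (-(g r * f r)) = f r * f r := by
          field_simp
        rw [happ]
        nlinarith
    have hconf : Conforms h κ := conforms_of_dom hfc h key hz2
    have hcone : h ∈ fluxCone N Rirr := by
      refine ⟨?_, fun r hr => ?_⟩
      · rw [hhdef, Matrix.mulVec_add, Matrix.mulVec_smul, hfN, hg0]; simp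
      · have hf0 : 0 ≤ f r := hfirr r hr
        rcases hf0.eq_or_lt with heq | hlt
        · rw [hz2 r heq.symm]
        · nlinarith [key r]
    have hcosth : cost κ w h = cost κ w f + t * cost κ w g :=
      cost_add_smul κ w f g t
    have hrh0 : h rh = 0 := by
      have hg' := (hTfacts rh hrhT).1
      rw [happ, hrh]
      field_simp
      ring
    have hfrh : f rh ≠ 0 := (hTfacts rh hrhT).2.1
    have hss : suppF h ⊆ suppF f := by
      intro r hr
      rw [mem_suppF] at hr ⊢
      intro h0
      exact hr (hz2 r h0)
    have hcard : (suppF h).card < (suppF f).card := by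
      refine Finset.card_lt_card ((Finset.ssubset_iff_of_subset hss).mpr ?_)
      exact ⟨rh, mem_suppF.mpr hfrh, by simp [mem_suppF, hrh0]⟩
    have hrs : h rstar = 1 + t * g rstar := by rw [happ, hfr]
    have hcostle : cost κ w h ≤ cost κ w f * h rstar := by
      rw [hcosth, hrs]
      have : t * cost κ w g ≤ t * (cost κ w f * g rstar) :=
        mul_le_mul_of_nonneg_left hd htpos.le
      nlinarith
    have hrsnn : 0 ≤ h rstar := by
      have := key rstar
      rw [hfr] at this
      linarith
    rcases hrsnn.eq_or_lt with heq | hpos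
    · -- h rstar = 0 forces h = 0, contradicting strictness of support
      exfalso
      have hch0 : cost κ w h ≤ 0 := by
        rw [← heq] at hcostle
        simpa using hcostle
      have hh0 : h = 0 := eq_zero_of_cost_nonpos hw hconf hch0
      apply hne
      refine Set.Subset.antisymm hsub ?_
      intro r hr
      have hfr' : f r ≠ 0 := hr
      have : h r = 0 := by rw [hh0]; rfl
      rw [happ] at this
      have hgr : g r ≠ 0 := by
        intro hg0'
        rw [hg0'] at this
        simp at this
        exact hfr' this
      exact Function.mem_support.mpr hgr
    · -- normalize
      refine ⟨(h rstar)⁻¹ • h, ⟨cone_smul _ (by positivity) hcone,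
        conforms_smul _ (by positivity) hconf, ?_⟩, ?_, ?_⟩
      · simp [smul_eq_mul]
        field_simp
      · rw [cost_smul]
        rw [inv_mul_le_iff₀ hpos]
        linarith [hcostle]
      · rw [suppF_smul (by positivity)]
        exact hcard
  · -- Case B: g (or its normalization) is itself feasible with smaller support
    push_neg at hex
    have hgconf : Conforms g κ := by
      refine conforms_of_dom hfc g (fun r => hex r) hzero
    have hγ : 0 ≤ g rstar := by
      have := hex rstar
      rw [hfr] at this
      linarith
    have hcg : 0 ≤ cost κ w g := cost_nonneg hw hgconf
    rcases hγ.eq_or_lt with heq | hpos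
    · exfalso
      rw [← heq] at hd
      simp at hd
      exact hgne (eq_zero_of_cost_nonpos hw hgconf hd)
    · have hgcone : g ∈ fluxCone N Rirr := by
        refine ⟨hg0, fun r hr => ?_⟩
        have hf0 : 0 ≤ f r := hfirr r hr
        rcases hf0.eq_or_lt with heq2 | hlt
        · rw [hzero r heq2.symm]
        · nlinarith [hex r]
      have hsss : suppF g ⊂ suppF f := by
        refine (Finset.ssubset_iff_of_subset ?_).mpr ?_
        · intro r hr
          rw [mem_suppF] at hr ⊢
          exact hsub (Function.mem_support.mpr hr)
        · obtain ⟨r, hr1, hr2⟩ := Set.exists_of_ssubset (hsub.ssubset_of_ne hne)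
          refine ⟨r, mem_suppF.mpr hr1, ?_⟩
          rw [mem_suppF]
          simpa using hr2
      refine ⟨(g rstar)⁻¹ • g, ⟨cone_smul _ (by positivity) hgcone,
        conforms_smul _ (by positivity) hgconf, ?_⟩, ?_, ?_⟩
      · simp [smul_eq_mul]
        field_simp
      · rw [cost_smul]
        rw [inv_mul_le_iff₀ hpos]
        linarith [hd]
      · rw [suppF_smul (by positivity)]
        exact Finset.card_lt_card hsss

lemma shrink (N : Matrix S R ℝ) (Rirr : Set R) (κ w : R → ℝ)
    (hw : ∀ r, 0 < w r) (rstar : R) (f g : R → ℝ)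
    (hf : Feas N Rirr κ rstar f)
    (hg0 : N.mulVec g = 0) (hgne : g ≠ 0)
    (hsub : Function.support g ⊆ Function.support f)
    (hne : Function.support g ≠ Function.support f) :
    ∃ f', Feas N Rirr κ rstar f' ∧ cost κ w f' ≤ cost κ w f ∧
      (suppF f').card < (suppF f).card := by
  rcases le_or_gt (cost κ w g) (cost κ w f * g rstar) with hd | hd
  · exact shrink_core N Rirr κ w hw rstar f g hf hg0 hgne hsub hne hd
  · refine shrink_core N Rirr κ w hw rstar f (-g) hf ?_ (neg_ne_zero.mpr hgne)
      ?_ ?_ ?_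
    · rw [Matrix.mulVec_neg, hg0]; simp
    · have hsn : Function.support (-g) = Function.support g := by ext r; simp
      rw [hsn]; exact hsub
    · have hsn : Function.support (-g) = Function.support g := by ext r; simp
      rw [hsn]; exact hne
    · rw [cost_neg]
      simp only [Pi.neg_apply]
      nlinarith

lemma exists_efm_le (N : Matrix S R ℝ) (Rirr : Set R) (κ w : R → ℝ)
    (hw : ∀ r, 0 < w r) (rstar : R) :
    ∀ n (f : R → ℝ), Feas N Rirr κ rstar f → (suppF f).card ≤ n →
      ∃ e, IsEFM N Rirr e ∧ Feas N Rirr κ rstar e ∧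
        cost κ w e ≤ cost κ w f := by
  intro n
  induction n with
  | zero =>
    intro f hf hcard
    exfalso
    have hmem : rstar ∈ suppF f := mem_suppF.mpr (by rw [hf.2.2]; exact one_ne_zero)
    have : suppF f = ∅ := Finset.card_eq_zero.mp (Nat.le_zero.mp hcard)
    rw [this] at hmem
    simp at hmem
  | succ n ih =>
    intro f hf hcard
    by_cases hefm : IsEFM N Rirr f
    · exact ⟨f, hefm, hf, le_refl _⟩
    · have hfne : f ≠ 0 := by
        intro h0
        have := hf.2.2
        rw [h0] at this
        simpa using this
      have hnotall : ¬ ∀ g ∈ fluxCone N Rirr, g ≠ 0 →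
          Function.support g ⊆ Function.support f →
          Function.support g = Function.support f :=
        fun hall => hefm ⟨hf.1, hfne, hall⟩
      push_neg at hnotall
      obtain ⟨g, hg1, hg2, hg3, hg4⟩ := hnotall
      obtain ⟨f', hf', hcost', hcard'⟩ :=
        shrink N Rirr κ w hw rstar f g hf hg1.1 hg2 hg3 hg4
      obtain ⟨e, he1, he2, he3⟩ := ih f' hf' (by omega)
      exact ⟨e, he1, he2, he3.trans hcost'⟩

lemma efm_unique (N : Matrix S R ℝ) (Rirr : Set R) (κ : R → ℝ) (rstar : R)
    (e e' : R → ℝ)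
    (he : IsEFM N Rirr e) (hfe : Feas N Rirr κ rstar e)
    (hfe' : Feas N Rirr κ rstar e')
    (hs : Function.support e' = Function.support e) : e' = e := by
  have hTne : (suppF e).Nonempty :=
    ⟨rstar, mem_suppF.mpr (by rw [hfe.2.2]; exact one_ne_zero)⟩
  have hsupp : ∀ r, e r = 0 → e' r = 0 := by
    intro r hr
    by_contra hr'
    have : r ∈ Function.support e := hs ▸ Function.mem_support.mpr hr'
    exact this hr
  have ratio_pos : ∀ r ∈ suppF e, 0 < e' r / e r := by
    intro r hr
    have her : e r ≠ 0 := mem_suppF.mp hr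
    have her' : e' r ≠ 0 := by
      intro h0
      have : r ∉ Function.support e' := fun hm => hm h0
      rw [hs] at this
      exact this her
    rcases hfe.2.1 r with h0 | ⟨h1, h2⟩ | ⟨h1, h2⟩
    · exact absurd h0 her
    · rcases hfe'.2.1 r with h0' | ⟨h1', h2'⟩ | ⟨h1', h2'⟩
      · exact absurd h0' her'
      · exact div_pos h1' h1
      · linarith
    · rcases hfe'.2.1 r with h0' | ⟨h1', h2'⟩ | ⟨h1', h2'⟩
      · exact absurd h0' her'
      · linarith
      · exact div_pos_of_neg_of_neg h1' h1
  obtain ⟨r₁, hr₁T, hr₁⟩ := (suppF e).exists_mem_eq_inf' hTne (fun r => e' r / e r)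
  set c : ℝ := (suppF e).inf' hTne (fun r => e' r / e r) with hc
  have hcpos : 0 < c := by
    rw [hr₁]
    exact ratio_pos r₁ hr₁T
  set h : R → ℝ := e' - c • e with hhdef
  have happ : ∀ r, h r = e' r - c * e r := fun r => by
    simp [hhdef, smul_eq_mul]
  have hz2 : ∀ r, e r = 0 → h r = 0 := by
    intro r hr
    rw [happ, hr, hsupp r hr]; ring
  have hcone : h ∈ fluxCone N Rirr := by
    refine ⟨?_, fun r hr => ?_⟩
    · rw [hhdef, Matrix.mulVec_sub, Matrix.mulVec_smul, hfe.1.1, hfe'.1.1]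
      simp
    · by_cases her : e r = 0
      · rw [hz2 r her]
      · have hrT : r ∈ suppF e := mem_suppF.mpr her
        have hepos : 0 < e r := lt_of_le_of_ne (hfe.1.2 r hr) (Ne.symm her)
        have hle : c ≤ e' r / e r := Finset.inf'_le _ hrT
        have : c * e r ≤ (e' r / e r) * e r :=
          mul_le_mul_of_nonneg_right hle hepos.le
        rw [div_mul_cancel₀ _ her] at this
        rw [happ]
        linarith
  have hr₁0 : h r₁ = 0 := by
    have her : e r₁ ≠ 0 := mem_suppF.mp hr₁T
    rw [happ, hr₁, div_mul_cancel₀ _ her]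
    ring
  have hh0 : h = 0 := by
    by_contra hne0
    have hsb : Function.support h ⊆ Function.support e := by
      intro r hr
      by_contra hre
      have hre' : e r = 0 := Function.notMem_support.mp hre
      exact hr (hz2 r hre')
    have heq := he.2.2 h hcone hne0 hsb
    have : r₁ ∈ Function.support h := by
      rw [heq]
      exact Function.mem_support.mpr (mem_suppF.mp hr₁T)
    exact this hr₁0
  have he'c : e' = c • e := by
    have := sub_eq_zero.mp (hhdef ▸ hh0)
    exact this
  have hc1 : c = 1 := by
    have := congrFun he'c rstar
    rw [hfe'.2.2] at this
    rw [Pi.smul_apply, smul_eq_mul, hfe.2.2, mul_one] at this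
    exact this.symm
  rw [he'c, hc1, one_smul]

end FMO

/-- fixed-metabolite optimality: if the problem of minimizing
`∑ r, w r * f r / κ r` over flux modes `f` conforming to `σ(κ)` with
`f rstar = 1` is feasible, then the minimum is attained at an EFM, and the
minimal value equals the minimum of the cost over all such EFMs.  (Terms with
`κ r = 0` vanish since `f r = 0` there, so the total sum equals the sum over
`supp κ`.) -/
theorem fixed_metabolite_min_at_efm {S R : Type*} [Fintype S] [Fintype R]
    (N : Matrix S R ℝ) (Rirr : Set R) (κ w : R → ℝ) (hw : ∀ r, 0 < w r)
    (rstar : R)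
    (hfeas : ∃ f ∈ fluxCone N Rirr, Conforms f κ ∧ f rstar = 1) :
    ∃ e : R → ℝ, IsEFM N Rirr e ∧ Conforms e κ ∧ e rstar = 1 ∧
      (∀ f ∈ fluxCone N Rirr, Conforms f κ → f rstar = 1 →
        ∑ r, w r * e r / κ r ≤ ∑ r, w r * f r / κ r) ∧
      (∀ e' : R → ℝ, IsEFM N Rirr e' → Conforms e' κ → e' rstar = 1 →
        ∑ r, w r * e r / κ r ≤ ∑ r, w r * e' r / κ r) := by
  obtain ⟨f₁, hf₁cone, hf₁conf, hf₁r⟩ := hfeas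
  have hf₁ : Feas N Rirr κ rstar f₁ := ⟨hf₁cone, hf₁conf, hf₁r⟩
  set E : Set (R → ℝ) := {e | IsEFM N Rirr e ∧ Feas N Rirr κ rstar e} with hE
  have hEne : E.Nonempty := by
    obtain ⟨e, he1, he2, _⟩ :=
      exists_efm_le N Rirr κ w hw rstar (suppF f₁).card f₁ hf₁ le_rfl
    exact ⟨e, he1, he2⟩
  have hinj : Set.InjOn (fun e => suppF e) E := by
    intro a ha b hb hab
    refine efm_unique N Rirr κ rstar b a hb.1 hb.2 ha.2 ?_
    ext r
    simp only at hab
    rw [Function.mem_support, Function.mem_support, ← mem_suppF, ← mem_suppF, hab]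
  have hfin : E.Finite := Set.Finite.of_finite_image (Set.toFinite _) hinj
  obtain ⟨e, heE, hemin⟩ := Set.exists_min_image E (cost κ w) hfin hEne
  refine ⟨e, heE.1, heE.2.2.1, heE.2.2.2, ?_, ?_⟩
  · intro f hfc hfconf hfr
    obtain ⟨e'', h1, h2, h3⟩ := exists_efm_le N Rirr κ w hw rstar
      (suppF f).card f ⟨hfc, hfconf, hfr⟩ le_rfl
    exact le_trans (hemin e'' ⟨h1, h2⟩) h3
  · intro e' h1 h2 h3
    exact hemin e' ⟨h1, h1.1, h2, h3⟩
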